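/- For n ≥ 1, the number of completely flooding cascade sets of the path graph P_n equals the n-th Fibonacci number f_n (where f_1 = f_2 = 1). -/

import Mathlib

open scoped Classical
open Polynomial

/-- One step of the cascade sequence: add all vertices having at least two
neighbors in the current set. -/
noncomputable def floodStep {V : Type*} (G : SimpleGraph V) [Fintype V]
    (C : Finset V) : Finset V :=
  C ∪ Finset.univ.filter (fun x => 2 ≤ (C.filter (fun y => G.Adj x y)).card)

/-- `C` completely floods `G`: the cascade sequence stabilizes to all of `V`.
Since `floodStep` is inflationary, this is equivalent to some iterate being `univ`. -/
def Floods {V : Type*} (G : SimpleGraph V) [Fintype V] (C : Finset V) : Prop :=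
  ∃ k, (floodStep G)^[k] C = Finset.univ

/-- The flood polynomial of `G`. -/
noncomputable def floodPoly {V : Type*} (G : SimpleGraph V) [Fintype V] :
    Polynomial ℕ :=
  ∑ C ∈ Finset.univ.filter (fun C : Finset V => Floods G C), Polynomial.X ^ C.card

/-- The degree of a vertex. -/
noncomputable def deg {V : Type*} (G : SimpleGraph V) [Fintype V] (v : V) : ℕ :=
  (Finset.univ.filter (fun y => G.Adj v y)).card


/-- A "good" subset of `{0,...,n-1}`: contains `0` and `n-1`, and has no two
consecutive missing elements. -/
def goodSet (n : ℕ) (C : Finset ℕ) : Prop :=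
  0 ∈ C ∧ n - 1 ∈ C ∧ ∀ i, i + 2 ≤ n → (i ∈ C ∨ i + 1 ∈ C)

noncomputable def goodCount (n : ℕ) : ℕ :=
  ((Finset.range n).powerset.filter (goodSet n)).card

lemma goodCount_one : goodCount 1 = 1 := by
  unfold goodCount
  rw [show (Finset.range 1).powerset.filter (goodSet 1) = {{0}} from ?_]
  · simp
  · ext C
    simp only [Finset.mem_filter, Finset.mem_powerset, Finset.mem_singleton, goodSet]
    constructor
    · rintro ⟨hsub, h0, -, -⟩
      apply Finset.Subset.antisymm hsub
      simpa using h0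
    · rintro rfl
      refine ⟨by simp, by simp, by simp, fun i hi => by omega⟩

lemma goodCount_two : goodCount 2 = 1 := by
  unfold goodCount
  rw [show (Finset.range 2).powerset.filter (goodSet 2) = {{0, 1}} from ?_]
  · simp
  · ext C
    simp only [Finset.mem_filter, Finset.mem_powerset, Finset.mem_singleton, goodSet]
    constructor
    · rintro ⟨hsub, h0, h1, -⟩
      apply Finset.Subset.antisymm hsub
      intro x hx
      simp only [Finset.mem_range] at hx
      have : x = 0 ∨ x = 1 := by omega
      rcases this with rfl | rfl
      · exact h0
      · exact h1
    · rintro rfl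
      refine ⟨by intro x hx; simp at hx; rcases hx with rfl|rfl <;> simp,
        by simp, by simp, fun i hi => by
        have : i = 0 := by omega
        subst this; simp⟩

lemma goodCount_rec (n : ℕ) : goodCount (n + 3) = goodCount (n + 2) + goodCount (n + 1) := by
  unfold goodCount
  rw [← Finset.card_filter_add_card_filter_not
    (s := (Finset.range (n + 3)).powerset.filter (goodSet (n + 3))) (fun C => n + 1 ∈ C)]
  congr 1
  · -- sets with n+1 present  ↔  good sets for n+2
    rw [Finset.filter_filter]
    refine Finset.card_bij' (fun C _ => C.erase (n + 2)) (fun D _ => insert (n + 2) D)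
      ?_ ?_ ?_ ?_
    · rintro C hC
      rw [Finset.mem_filter] at hC
      simp only [Finset.mem_filter, Finset.mem_powerset, goodSet] at hC ⊢
      obtain ⟨hsub, ⟨h0, hlast, hcons⟩, hn1⟩ := hC
      refine ⟨?_, ?_, ?_, ?_⟩
      · intro x hx
        rw [Finset.mem_erase] at hx
        have := hsub hx.2
        simp only [Finset.mem_range] at this ⊢
        omega
      · rw [Finset.mem_erase]; exact ⟨by omega, h0⟩
      · rw [Finset.mem_erase]
        refine ⟨by omega, by simpa using hn1⟩
      · intro i hi
        rcases hcons i (by omega) with h | h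
        · exact Or.inl (Finset.mem_erase.mpr ⟨by omega, h⟩)
        · exact Or.inr (Finset.mem_erase.mpr ⟨by omega, h⟩)
    · rintro D hD
      rw [Finset.mem_filter] at hD ⊢
      simp only [Finset.mem_filter, Finset.mem_powerset, goodSet] at hD ⊢
      obtain ⟨hsub, h0, hlast, hcons⟩ := hD
      refine ⟨?_, ⟨?_, ?_, ?_⟩, ?_⟩
      · intro x hx
        rw [Finset.mem_insert] at hx
        simp only [Finset.mem_range]
        rcases hx with rfl | hx
        · omega
        · have := hsub hx; simp only [Finset.mem_range] at this; omega
      · exact Finset.mem_insert_of_mem h0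
      · simp
      · intro i hi
        rcases Nat.lt_or_ge (i + 2) (n + 3) with h | h
        · rcases hcons i (by omega) with hh | hh
          · exact Or.inl (Finset.mem_insert_of_mem hh)
          · exact Or.inr (Finset.mem_insert_of_mem hh)
        · have : i = n + 1 := by omega
          subst this
          exact Or.inl (Finset.mem_insert_of_mem (by simpa using hlast))
      · exact Finset.mem_insert_of_mem (by simpa using hlast)
    · rintro C hC
      rw [Finset.mem_filter] at hC
      simp only [Finset.mem_filter, Finset.mem_powerset, goodSet] at hC
      exact Finset.insert_erase (by simpa using hC.2.1.2.1)
    · rintro D hD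
      simp only [Finset.mem_filter, Finset.mem_powerset] at hD
      refine Finset.erase_insert ?_
      intro h
      have := hD.1 h
      simp at this
  · -- sets with n+1 absent  ↔  good sets for n+1
    rw [Finset.filter_filter]
    refine Finset.card_bij' (fun C _ => C.erase (n + 2)) (fun D _ => insert (n + 2) D)
      ?_ ?_ ?_ ?_
    · rintro C hC
      rw [Finset.mem_filter] at hC
      simp only [Finset.mem_filter, Finset.mem_powerset, goodSet] at hC ⊢
      obtain ⟨hsub, ⟨h0, hlast, hcons⟩, hn1⟩ := hC
      have hn : n ∈ C := by
        rcases hcons n (by omega) with h | h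
        · exact h
        · exact absurd h hn1
      refine ⟨?_, ?_, ?_, ?_⟩
      · intro x hx
        rw [Finset.mem_erase] at hx
        have := hsub hx.2
        simp only [Finset.mem_range] at this ⊢
        rcases Nat.lt_or_ge x (n + 1) with h | h
        · exact h
        · exfalso
          have : x = n + 1 := by omega
          subst this; exact hn1 hx.2
      · rw [Finset.mem_erase]; exact ⟨by omega, h0⟩
      · rw [Finset.mem_erase]
        refine ⟨by omega, by simpa using hn⟩
      · intro i hi
        rcases hcons i (by omega) with h | h
        · exact Or.inl (Finset.mem_erase.mpr ⟨by omega, h⟩)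
        · exact Or.inr (Finset.mem_erase.mpr ⟨by omega, h⟩)
    · rintro D hD
      rw [Finset.mem_filter] at hD ⊢
      simp only [Finset.mem_filter, Finset.mem_powerset, goodSet] at hD ⊢
      obtain ⟨hsub, h0, hlast, hcons⟩ := hD
      have hDn : ∀ x ∈ D, x < n + 1 := by
        intro x hx; have := hsub hx; simpa using this
      refine ⟨?_, ⟨?_, ?_, ?_⟩, ?_⟩
      · intro x hx
        rw [Finset.mem_insert] at hx
        simp only [Finset.mem_range]
        rcases hx with rfl | hx
        · omega
        · have := hDn x hx; omega
      · exact Finset.mem_insert_of_mem h0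
      · simp
      · intro i hi
        rcases Nat.lt_or_ge (i + 2) (n + 2) with h | h
        · rcases hcons i (by omega) with hh | hh
          · exact Or.inl (Finset.mem_insert_of_mem hh)
          · exact Or.inr (Finset.mem_insert_of_mem hh)
        · rcases Nat.eq_or_lt_of_le h with h' | h'
          · -- i + 2 = n + 2, i = n
            have : i = n := by omega
            subst this
            exact Or.inl (Finset.mem_insert_of_mem (by simpa using hlast))
          · -- i + 2 = n + 3, i = n + 1
            have : i = n + 1 := by omega
            subst this
            exact Or.inr (Finset.mem_insert_self _ _)
      · intro h
        rw [Finset.mem_insert] at h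
        rcases h with h | h
        · omega
        · exact absurd (hDn _ h) (by omega)
    · rintro C hC
      rw [Finset.mem_filter] at hC
      simp only [Finset.mem_filter, Finset.mem_powerset, goodSet] at hC
      refine Finset.insert_erase ?_
      have hcons := hC.2.1.2.2
      have hn1 := hC.2.2
      rcases hcons (n + 1) (by omega) with h | h
      · exact absurd h hn1
      · exact h
    · rintro D hD
      simp only [Finset.mem_filter, Finset.mem_powerset] at hD
      refine Finset.erase_insert ?_
      intro h
      have := hD.1 h
      simp at this

lemma goodCount_eq_fib : ∀ n : ℕ, goodCount (n + 1) = Nat.fib (n + 1) := by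
  intro n
  induction n using Nat.twoStepInduction with
  | zero => simpa using goodCount_one
  | one => simpa using goodCount_two
  | more n ih1 ih2 =>
    rw [show n + 2 + 1 = n + 3 from rfl, goodCount_rec, ih1, ih2]
    conv_rhs => rw [show n + 3 = (n + 1) + 2 from rfl, Nat.fib_add_two]
    exact Nat.add_comm _ _

/-- Characterization of flooding sets of the path graph. -/
def pathGood (n : ℕ) (C : Finset (Fin n)) : Prop :=
  (∀ x : Fin n, x.val = 0 → x ∈ C) ∧ (∀ x : Fin n, x.val = n - 1 → x ∈ C) ∧
  ∀ x y : Fin n, x.val + 1 = y.val → (x ∈ C ∨ y ∈ C)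

lemma mem_floodStep_iff {V : Type*} (G : SimpleGraph V) [Fintype V]
    (C : Finset V) (x : V) :
    x ∈ floodStep G C ↔ x ∈ C ∨ 2 ≤ (C.filter (fun y => G.Adj x y)).card := by
  simp [floodStep]

lemma endpoint_stays_out {n : ℕ} (hn : 1 ≤ n) (x : Fin n)
    (hx : x.val = 0 ∨ x.val = n - 1) (D : Finset (Fin n)) (hxD : x ∉ D) :
    x ∉ floodStep (SimpleGraph.pathGraph n) D := by
  rw [mem_floodStep_iff]
  rintro (h | h)
  · exact hxD h
  · have hle : (D.filter (fun y => (SimpleGraph.pathGraph n).Adj x y)).card ≤ 1 := by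
      rw [Finset.card_le_one]
      intro a ha b hb
      rw [Finset.mem_filter, SimpleGraph.pathGraph_adj] at ha hb
      have h1 := ha.2
      have h2 := hb.2
      have := a.isLt
      have := b.isLt
      have := x.isLt
      apply Fin.ext
      omega
    omega

lemma pair_stays_out {n : ℕ} (x y : Fin n) (hxy : x.val + 1 = y.val)
    (D : Finset (Fin n)) (hxD : x ∉ D) (hyD : y ∉ D) :
    x ∉ floodStep (SimpleGraph.pathGraph n) D ∧
    y ∉ floodStep (SimpleGraph.pathGraph n) D := by
  constructor
  · rw [mem_floodStep_iff]
    rintro (h | h)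
    · exact hxD h
    · have hle : (D.filter (fun z => (SimpleGraph.pathGraph n).Adj x z)).card ≤ 1 := by
        rw [Finset.card_le_one]
        intro a ha b hb
        rw [Finset.mem_filter, SimpleGraph.pathGraph_adj] at ha hb
        have ha2 := ha.2
        have hb2 := hb.2
        have hay : a.val ≠ y.val := fun hc => hyD ((Fin.ext hc : a = y) ▸ ha.1)
        have hby : b.val ≠ y.val := fun hc => hyD ((Fin.ext hc : b = y) ▸ hb.1)
        apply Fin.ext
        omega
      omega
  · rw [mem_floodStep_iff]
    rintro (h | h)
    · exact hyD h
    · have hle : (D.filter (fun z => (SimpleGraph.pathGraph n).Adj y z)).card ≤ 1 := by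
        rw [Finset.card_le_one]
        intro a ha b hb
        rw [Finset.mem_filter, SimpleGraph.pathGraph_adj] at ha hb
        have ha2 := ha.2
        have hb2 := hb.2
        have hax : a.val ≠ x.val := fun hc => hxD ((Fin.ext hc : a = x) ▸ ha.1)
        have hbx : b.val ≠ x.val := fun hc => hxD ((Fin.ext hc : b = x) ▸ hb.1)
        apply Fin.ext
        omega
      omega

lemma floods_iff_pathGood {n : ℕ} (hn : 1 ≤ n) (C : Finset (Fin n)) :
    Floods (SimpleGraph.pathGraph n) C ↔ pathGood n C := by
  constructor
  · rintro ⟨k, hk⟩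
    refine ⟨?_, ?_, ?_⟩
    · intro x hx
      by_contra hxC
      have : ∀ m, x ∉ (floodStep (SimpleGraph.pathGraph n))^[m] C := by
        intro m
        induction m with
        | zero => simpa using hxC
        | succ m ih =>
          rw [Function.iterate_succ_apply']
          exact endpoint_stays_out hn x (Or.inl hx) _ ih
      exact this k (hk ▸ Finset.mem_univ x)
    · intro x hx
      by_contra hxC
      have : ∀ m, x ∉ (floodStep (SimpleGraph.pathGraph n))^[m] C := by
        intro m
        induction m with
        | zero => simpa using hxC
        | succ m ih =>
          rw [Function.iterate_succ_apply']
          exact endpoint_stays_out hn x (Or.inr hx) _ ih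
      exact this k (hk ▸ Finset.mem_univ x)
    · intro x y hxy
      by_contra hc
      push_neg at hc
      obtain ⟨hxC, hyC⟩ := hc
      have : ∀ m, x ∉ (floodStep (SimpleGraph.pathGraph n))^[m] C ∧
          y ∉ (floodStep (SimpleGraph.pathGraph n))^[m] C := by
        intro m
        induction m with
        | zero => simpa using ⟨hxC, hyC⟩
        | succ m ih =>
          rw [Function.iterate_succ_apply']
          exact pair_stays_out x y hxy _ ih.1 ih.2
      exact (this k).1 (hk ▸ Finset.mem_univ x)
  · rintro ⟨h0, hlast, hcons⟩
    refine ⟨1, ?_⟩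
    rw [Function.iterate_one]
    apply Finset.eq_univ_iff_forall.mpr
    intro x
    rw [mem_floodStep_iff]
    by_cases hxC : x ∈ C
    · exact Or.inl hxC
    · right
      have hx0 : x.val ≠ 0 := fun h => hxC (h0 x h)
      have hxl : x.val ≠ n - 1 := fun h => hxC (hlast x h)
      have hb := x.isLt
      set a : Fin n := ⟨x.val - 1, by omega⟩ with ha_def
      set b : Fin n := ⟨x.val + 1, by omega⟩ with hb_def
      have haC : a ∈ C := by
        rcases hcons a x (show x.val - 1 + 1 = x.val by omega) with h | h
        · exact h
        · exact absurd h hxC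
      have hbC : b ∈ C := by
        rcases hcons x b rfl with h | h
        · exact absurd h hxC
        · exact h
      have hmem_a : a ∈ C.filter (fun y => (SimpleGraph.pathGraph n).Adj x y) := by
        rw [Finset.mem_filter, SimpleGraph.pathGraph_adj]
        exact ⟨haC, Or.inr (show x.val - 1 + 1 = x.val by omega)⟩
      have hmem_b : b ∈ C.filter (fun y => (SimpleGraph.pathGraph n).Adj x y) := by
        rw [Finset.mem_filter, SimpleGraph.pathGraph_adj]
        exact ⟨hbC, Or.inl rfl⟩
      have hab : a ≠ b := by
        intro h
        have h' : x.val - 1 = x.val + 1 := congrArg Fin.val h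
        omega
      have := Finset.one_lt_card.mpr ⟨a, hmem_a, b, hmem_b, hab⟩
      omega

lemma card_pathGood {n : ℕ} (hn : 1 ≤ n) :
    (Finset.univ.filter (fun C : Finset (Fin n) => pathGood n C)).card = goodCount n := by
  unfold goodCount
  refine Finset.card_bij' (fun C _ => C.map Fin.valEmbedding)
    (fun D _ => Finset.univ.filter (fun x : Fin n => x.val ∈ D)) ?_ ?_ ?_ ?_
  · rintro C hC
    rw [Finset.mem_filter] at hC
    obtain ⟨-, h0, hlast, hcons⟩ := hC
    rw [Finset.mem_filter, Finset.mem_powerset]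
    refine ⟨?_, ?_, ?_, ?_⟩
    · intro m hm
      simp only [Finset.mem_map, Fin.valEmbedding_apply] at hm
      obtain ⟨x, -, rfl⟩ := hm
      simpa using x.isLt
    · simp only [Finset.mem_map, Fin.valEmbedding_apply]
      exact ⟨⟨0, by omega⟩, h0 _ rfl, rfl⟩
    · simp only [Finset.mem_map, Fin.valEmbedding_apply]
      exact ⟨⟨n - 1, by omega⟩, hlast _ rfl, rfl⟩
    · intro i hi
      simp only [Finset.mem_map, Fin.valEmbedding_apply]
      rcases hcons ⟨i, by omega⟩ ⟨i + 1, by omega⟩ rfl with h | h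
      · exact Or.inl ⟨_, h, rfl⟩
      · exact Or.inr ⟨_, h, rfl⟩
  · rintro D hD
    rw [Finset.mem_filter, Finset.mem_powerset] at hD
    obtain ⟨hsub, h0, hlast, hcons⟩ := hD
    rw [Finset.mem_filter]
    refine ⟨Finset.mem_univ _, ?_, ?_, ?_⟩
    · intro x hx
      rw [Finset.mem_filter]
      exact ⟨Finset.mem_univ _, by rw [hx]; exact h0⟩
    · intro x hx
      rw [Finset.mem_filter]
      exact ⟨Finset.mem_univ _, by rw [hx]; exact hlast⟩
    · intro x y hxy
      have hy := y.isLt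
      rcases hcons x.val (by omega) with h | h
      · exact Or.inl (Finset.mem_filter.mpr ⟨Finset.mem_univ _, h⟩)
      · exact Or.inr (Finset.mem_filter.mpr ⟨Finset.mem_univ _, by rwa [← hxy]⟩)
  · rintro C -
    ext x
    simp only [Finset.mem_filter, Finset.mem_univ, true_and, Finset.mem_map,
      Fin.valEmbedding_apply]
    constructor
    · rintro ⟨a, ha, hav⟩
      rwa [show a = x from Fin.ext hav] at ha
    · intro hx
      exact ⟨x, hx, rfl⟩
  · rintro D hD
    rw [Finset.mem_filter, Finset.mem_powerset] at hD
    ext m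
    simp only [Finset.mem_map, Finset.mem_filter, Finset.mem_univ, true_and,
      Fin.valEmbedding_apply]
    constructor
    · rintro ⟨x, hx, rfl⟩
      exact hx
    · intro hm
      have : m < n := by simpa using hD.1 hm
      exact ⟨⟨m, this⟩, hm, rfl⟩

theorem card_path_flood_sets_eq_fib (n : ℕ) (hn : 1 ≤ n) :
    (Finset.univ.filter (fun C : Finset (Fin n) =>
        Floods (SimpleGraph.pathGraph n) C)).card = Nat.fib n := by
  have h1 : Finset.univ.filter (fun C : Finset (Fin n) =>
      Floods (SimpleGraph.pathGraph n) C) =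
      Finset.univ.filter (fun C : Finset (Fin n) => pathGood n C) :=
    Finset.filter_congr (fun C _ => floods_iff_pathGood hn C)
  rw [h1, card_pathGood hn]
  cases n with
  | zero => omega
  | succ m => exact goodCount_eq_fib m
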